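/- Let n ≥ 1 and let φ : FreeGroup (Fin n) →* Multiplicative (Fin n → ZMod 2) be the homomorphism sending the i-th free generator xᵢ to the i-th standard basis vector. Then the kernel of φ equals the normal closure in FreeGroup (Fin n) of the set of squares { (∏_{i∈A} xᵢ)² : A a nonempty subset of Fin n }, where the product is taken in increasing order of indices. In particular, the elementary abelian 2-group (ZMod 2)ⁿ is presented on n generators by the relators consisting of the square of one lift of each of its 2ⁿ − 1 nontrivial elements. -/

import Mathlib

/-- The homomorphism from the free group on `n` generators to `(ℤ/2)ⁿ`
(written multiplicatively) sending the `i`-th generator to the `i`-th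
standard basis vector. -/
def mod2Abelianization (n : ℕ) :
    FreeGroup (Fin n) →* Multiplicative (Fin n → ZMod 2) :=
  FreeGroup.lift fun i => Multiplicative.ofAdd (Pi.single i 1)

/-- The product, in increasing order of indices, of the free generators
indexed by a finite set `A`. -/
def incProd {n : ℕ} (A : Finset (Fin n)) : FreeGroup (Fin n) :=
  ((A.sort (· ≤ ·)).map FreeGroup.of).prod

lemma incProd_empty {n : ℕ} : incProd (∅ : Finset (Fin n)) = 1 := by
  simp [incProd]

lemma incProd_singleton {n : ℕ} (i : Fin n) : incProd ({i} : Finset (Fin n)) = FreeGroup.of i := by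
  simp [incProd, Finset.sort_singleton]

lemma incProd_pair {n : ℕ} {i j : Fin n} (h : i < j) :
    incProd ({i, j} : Finset (Fin n)) = FreeGroup.of i * FreeGroup.of j := by
  have hsort : ({i, j} : Finset (Fin n)).sort (· ≤ ·) = [i, j] := by
    rw [Finset.sort_insert (· ≤ ·) (by simpa using h.le) (by simpa using h.ne),
      Finset.sort_singleton]
  simp [incProd, hsort]

/-- The square of every element of `Multiplicative ((ZMod 2)ⁿ)` is trivial. -/
lemma sq_eq_one_mod2 {n : ℕ} (v : Multiplicative (Fin n → ZMod 2)) : v ^ 2 = 1 := by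
  apply Multiplicative.toAdd.injective
  show (2 : ℕ) • v.toAdd = 0
  funext i
  show (2 : ℕ) • v.toAdd i = 0
  rw [two_nsmul]
  revert i
  intro i
  exact (by decide : ∀ a : ZMod 2, a + a = 0) _

/-- The kernel of the map onto the elementary abelian `2`-group `(ℤ/2)ⁿ` is the
normal closure of the squares of one lift of each of the `2ⁿ − 1` nontrivial
elements. -/
theorem ker_mod2Abelianization_eq_normalClosure_of_squares (n : ℕ) (hn : 1 ≤ n) :
    (mod2Abelianization n).ker =
      Subgroup.normalClosure
        {x : FreeGroup (Fin n) |
          ∃ A : Finset (Fin n), A.Nonempty ∧ x = (incProd A) ^ 2} := by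
  set S : Set (FreeGroup (Fin n)) :=
    {x : FreeGroup (Fin n) | ∃ A : Finset (Fin n), A.Nonempty ∧ x = (incProd A) ^ 2} with hS
  set N : Subgroup (FreeGroup (Fin n)) := Subgroup.normalClosure S with hN
  -- the easy inclusion
  have hle : N ≤ (mod2Abelianization n).ker := by
    apply Subgroup.normalClosure_le_normal
    rintro x ⟨A, -, rfl⟩
    have : mod2Abelianization n ((incProd A) ^ 2) = 1 := by
      rw [map_pow]; exact sq_eq_one_mod2 _
    simpa [MonoidHom.mem_ker] using this
  -- now work in the quotient by N
  refine le_antisymm ?_ hle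
  set π : FreeGroup (Fin n) →* FreeGroup (Fin n) ⧸ N := QuotientGroup.mk' N with hπ
  set g : Fin n → FreeGroup (Fin n) ⧸ N := fun i => π (FreeGroup.of i) with hg
  have sqA : ∀ A : Finset (Fin n), π (incProd A) ^ 2 = 1 := by
    intro A
    rcases A.eq_empty_or_nonempty with rfl | hA
    · simp [incProd_empty]
    · rw [← map_pow, hπ]
      rw [QuotientGroup.mk'_apply, QuotientGroup.eq_one_iff]
      exact Subgroup.subset_normalClosure ⟨A, hA, rfl⟩
  have sqg : ∀ i, g i ^ 2 = 1 := by
    intro i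
    simpa [incProd_singleton, hg] using sqA {i}
  have comm_lt : ∀ {i j : Fin n}, i < j → Commute (g i) (g j) := by
    intro i j hij
    have hab : (g i * g j) ^ 2 = 1 := by
      have := sqA {i, j}
      rwa [incProd_pair hij, map_mul] at this
    have h1 : (g i)⁻¹ = g i := by
      rw [inv_eq_iff_mul_eq_one, ← sq]; exact sqg i
    have h2 : (g j)⁻¹ = g j := by
      rw [inv_eq_iff_mul_eq_one, ← sq]; exact sqg j
    have h3 : (g i * g j)⁻¹ = g i * g j := by
      rw [inv_eq_iff_mul_eq_one, ← sq]; exact hab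
    show g i * g j = g j * g i
    calc g i * g j = (g i * g j)⁻¹ := h3.symm
      _ = (g j)⁻¹ * (g i)⁻¹ := mul_inv_rev _ _
      _ = g j * g i := by rw [h1, h2]
  have comm : ∀ i j, Commute (g i) (g j) := by
    intro i j
    rcases lt_trichotomy i j with h | rfl | h
    · exact comm_lt h
    · exact Commute.refl _
    · exact (comm_lt h).symm
  -- the "inverse" map from (ZMod 2)ⁿ into the quotient
  set f : (Fin n → ZMod 2) → FreeGroup (Fin n) ⧸ N := fun v =>
    Finset.univ.noncommProd (fun i => g i ^ (v i).val)
      (fun i _ j _ _ => (comm i j).pow_pow _ _) with hf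
  have key : ∀ (i : Fin n) (a b : ZMod 2),
      g i ^ ((a + b).val) = g i ^ a.val * g i ^ b.val := by
    intro i a b
    rw [ZMod.val_add, ← pow_eq_pow_mod _ (sqg i), pow_add]
  have fadd : ∀ u v : Fin n → ZMod 2, f (u + v) = f u * f v := by
    intro u v
    rw [hf]
    simp only
    rw [← Finset.noncommProd_mul_distrib (fun i => g i ^ (u i).val)
      (fun i => g i ^ (v i).val)
      (fun i _ j _ _ => (comm i j).pow_pow _ _)
      (fun i _ j _ _ => (comm i j).pow_pow _ _)
      (fun i _ j _ _ => (comm i j).pow_pow _ _)]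
    exact Finset.noncommProd_congr rfl
      (fun i _ => by simp only [Pi.add_apply, Pi.mul_apply]; exact key i (u i) (v i)) _
  set ψ : Multiplicative (Fin n → ZMod 2) →* FreeGroup (Fin n) ⧸ N :=
    MonoidHom.mk' (fun v => f v.toAdd) (fun u v => fadd _ _) with hψ
  have single_eval : ∀ i : Fin n, f (Pi.single i 1) = g i := by
    intro i
    rw [hf]
    simp only
    rw [← Finset.insert_erase (Finset.mem_univ i)]
    erw [Finset.noncommProd_insert_of_notMem _ _ _ _ (Finset.notMem_erase _ _)]
    have hones : ∀ j ∈ Finset.univ.erase i,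
        g j ^ ((Pi.single i 1 : Fin n → ZMod 2) j).val = 1 := by
      intro j hj
      have hji : j ≠ i := (Finset.mem_erase.mp hj).1
      rw [Pi.single_eq_of_ne hji]
      simp
    rw [Finset.noncommProd_eq_pow_card _ _ _ 1 hones]
    simp [ZMod.val_one]
  have hcomp : ψ.comp (mod2Abelianization n) = π := by
    apply FreeGroup.ext_hom
    intro i
    show ψ (mod2Abelianization n (FreeGroup.of i)) = g i
    rw [mod2Abelianization, FreeGroup.lift_apply_of]
    show f (Multiplicative.toAdd (Multiplicative.ofAdd (Pi.single i 1))) = g i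
    rw [toAdd_ofAdd]
    exact single_eval i
  intro w hw
  have hπw : π w = 1 := by
    have := DFunLike.congr_fun hcomp w
    rw [MonoidHom.comp_apply] at this
    rw [← this, MonoidHom.mem_ker.mp hw, map_one]
  rwa [hπ, QuotientGroup.mk'_apply, QuotientGroup.eq_one_iff] at hπw
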